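/- Let f : S² → ℝ be continuous with f(m) > 0 for all m and ∫_{S²} f dσ = 1, and set Q = ∫_{S²} (m mᵀ − I/3) f(m) dσ(m). Then Q is a real symmetric traceless 3×3 matrix and every eigenvalue of Q lies in the open interval (−1/3, 2/3), i.e. Q ∈ 𝒬_phys. More generally, for any probability measure μ on S², every eigenvalue of ∫_{S²} (m mᵀ − I/3) dμ(m) lies in the closed interval [−1/3, 2/3]. -/

import Mathlib

open Matrix MeasureTheory Metric

noncomputable section

/-- The uniform (rotation-invariant) probability measure on the unit sphere S² ⊆ ℝ³. -/
def sphereSigma : Measure (sphere (0 : EuclideanSpace ℝ (Fin 3)) 1) :=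
  (((volume : Measure (EuclideanSpace ℝ (Fin 3))).toSphere) Set.univ)⁻¹ •
    ((volume : Measure (EuclideanSpace ℝ (Fin 3))).toSphere)

namespace SecondMomentAux

open scoped Pointwise

abbrev E3 := EuclideanSpace ℝ (Fin 3)
abbrev S2 := sphere (0 : E3) 1

lemma coord_continuous (i : Fin 3) : Continuous fun m : S2 => (m : E3) i :=
  (EuclideanSpace.proj i).continuous.comp continuous_subtype_val

lemma cont_integrable (μ : Measure S2) [IsFiniteMeasure μ] {g : S2 → ℝ} (hg : Continuous g) :
    Integrable g μ :=
  hg.integrable_of_hasCompactSupport (HasCompactSupport.of_compactSpace g)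

lemma sum_sq_coord (m : S2) : ∑ i, (m : E3) i ^ 2 = 1 := by
  have h : ‖(m : E3)‖ = 1 := by simpa using mem_sphere_zero_iff_norm.mp m.2
  have h1 := EuclideanSpace.norm_eq (m : E3)
  rw [h] at h1
  have h2 : ∑ i, ‖(m : E3) i‖ ^ 2 = 1 := by
    have := congrArg (· ^ 2) h1.symm
    simpa [Real.sq_sqrt (Finset.sum_nonneg fun i _ => sq_nonneg _)] using this
  simpa [sq_abs] using h2

lemma pointwise_quad (v : Fin 3 → ℝ) (h : ℝ) (m : S2) :
    ∑ i, v i * (∑ j, (((m : E3) i * (m : E3) j - if i = j then (1/3:ℝ) else 0) * h) * v j)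
      = ((∑ i, (m : E3) i * v i)^2 - (∑ i, v i^2)/3) * h := by
  have e1 : (∑ i, (m : E3) i * v i)^2 = ∑ i, ∑ j, ((m:E3) i * v i) * ((m:E3) j * v j) := by
    rw [sq, Finset.sum_mul_sum]
  simp only [sub_mul, mul_sub, Finset.mul_sum, Finset.sum_sub_distrib, ite_mul, zero_mul,
    mul_ite, mul_zero, e1, Finset.sum_mul]
  congr 1
  · exact Finset.sum_congr rfl fun i _ => Finset.sum_congr rfl fun j _ => by ring
  · rw [Finset.sum_div, Finset.sum_mul]
    refine Finset.sum_congr rfl fun i _ => ?_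
    rw [Finset.sum_ite_eq, if_pos (Finset.mem_univ i)]
    ring

lemma quad_form (μ : Measure S2) [IsFiniteMeasure μ] (h : S2 → ℝ) (hc : Continuous h)
    (v : Fin 3 → ℝ) :
    v ⬝ᵥ (Matrix.of fun i j => ∫ m : S2,
        (((m : E3) i * (m : E3) j - if i = j then (1/3:ℝ) else 0) * h m) ∂μ) *ᵥ v
      = ∫ m : S2, ((∑ i, (m : E3) i * v i)^2 - (∑ i, v i^2)/3) * h m ∂μ := by
  have hcont : ∀ i j : Fin 3,
      Continuous fun m : S2 => (((m : E3) i * (m : E3) j - if i = j then (1/3:ℝ) else 0) * h m) :=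
    fun i j => (((coord_continuous i).mul (coord_continuous j)).sub continuous_const).mul hc
  have step1 : ∀ i : Fin 3,
      v i * (∑ j, (∫ m : S2, (((m : E3) i * (m : E3) j - if i = j then (1/3:ℝ) else 0) * h m) ∂μ) * v j)
        = ∫ m : S2, v i * ∑ j, (((m : E3) i * (m : E3) j - if i = j then (1/3:ℝ) else 0) * h m) * v j ∂μ := by
    intro i
    rw [integral_const_mul]
    congr 1
    calc ∑ j, (∫ m : S2, (((m : E3) i * (m : E3) j - if i = j then (1/3:ℝ) else 0) * h m) ∂μ) * v j
        = ∑ j, ∫ m : S2, (((m : E3) i * (m : E3) j - if i = j then (1/3:ℝ) else 0) * h m) * v j ∂μ :=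
          Finset.sum_congr rfl fun j _ => (integral_mul_const _ _).symm
      _ = ∫ m : S2, ∑ j, (((m : E3) i * (m : E3) j - if i = j then (1/3:ℝ) else 0) * h m) * v j ∂μ :=
          (integral_finset_sum _ fun j _ => cont_integrable μ ((hcont i j).mul continuous_const)).symm
  calc v ⬝ᵥ (Matrix.of fun i j => ∫ m : S2,
        (((m : E3) i * (m : E3) j - if i = j then (1/3:ℝ) else 0) * h m) ∂μ) *ᵥ v
      = ∑ i, v i * (∑ j, (∫ m : S2, (((m : E3) i * (m : E3) j - if i = j then (1/3:ℝ) else 0) * h m) ∂μ) * v j) := rfl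
    _ = ∑ i, ∫ m : S2, v i * ∑ j, (((m : E3) i * (m : E3) j - if i = j then (1/3:ℝ) else 0) * h m) * v j ∂μ :=
        Finset.sum_congr rfl fun i _ => step1 i
    _ = ∫ m : S2, ∑ i, v i * ∑ j, (((m : E3) i * (m : E3) j - if i = j then (1/3:ℝ) else 0) * h m) * v j ∂μ := by
        rw [← integral_finset_sum]
        exact fun i _ => cont_integrable μ (continuous_const.mul (continuous_finset_sum _
          fun j _ => (hcont i j).mul continuous_const))
    _ = ∫ m : S2, ((∑ i, (m : E3) i * v i)^2 - (∑ i, v i^2)/3) * h m ∂μ :=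
        integral_congr_ae (Filter.Eventually.of_forall fun m => pointwise_quad v (h m) m)

lemma eig_vec {Q : Matrix (Fin 3) (Fin 3) ℝ} {l : ℝ} (hl : l ∈ spectrum ℝ Q) :
    ∃ v : Fin 3 → ℝ, v ≠ 0 ∧ Q.mulVec v = l • v := by
  rw [spectrum.mem_iff] at hl
  rw [Matrix.isUnit_iff_isUnit_det, isUnit_iff_ne_zero, not_not,
    ← Matrix.exists_mulVec_eq_zero_iff] at hl
  obtain ⟨v, hv, hQv⟩ := hl
  refine ⟨v, hv, ?_⟩
  have h1 : (algebraMap ℝ (Matrix (Fin 3) (Fin 3) ℝ) l) *ᵥ v = l • v := by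
    simp [Algebra.algebraMap_eq_smul_one, Matrix.smul_mulVec]
  rw [Matrix.sub_mulVec, sub_eq_zero, h1] at hQv
  exact hQv.symm

lemma toSphere_univ_ne_zero : ((volume : Measure E3).toSphere) Set.univ ≠ 0 := by
  rw [Measure.toSphere_apply_univ]
  refine mul_ne_zero ?_ ?_
  · simp [finrank_euclideanSpace]
  · exact (measure_ball_pos _ _ one_pos).ne'

instance : IsProbabilityMeasure sphereSigma := by
  constructor
  rw [sphereSigma, Measure.smul_apply, smul_eq_mul]
  exact ENNReal.inv_mul_cancel toSphere_univ_ne_zero (measure_ne_top _ _)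

lemma null_of_submodule {p : Submodule ℝ E3} (hp : p ≠ ⊤) {Z : Set S2}
    (hZm : MeasurableSet Z) (hZ : ∀ m ∈ Z, (m : E3) ∈ p) :
    sphereSigma Z = 0 := by
  have h1 : (volume : Measure E3).toSphere Z = 0 := by
    rw [Measure.toSphere_apply' _ hZm]
    have hsub : (Set.Ioo (0:ℝ) 1 • ((↑) '' Z : Set E3)) ⊆ (p : Set E3) := by
      rintro x ⟨r, hr, y, hy, rfl⟩
      obtain ⟨m, hm, rfl⟩ := hy
      exact p.smul_mem r (hZ m hm)
    have h0 : (volume : Measure E3) (p : Set E3) = 0 := Measure.addHaar_submodule _ p hp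
    simp [measure_mono_null hsub h0]
  rw [sphereSigma, Measure.smul_apply, smul_eq_mul, h1, mul_zero]

def vecE (v : Fin 3 → ℝ) : E3 := (WithLp.equiv 2 (Fin 3 → ℝ)).symm v

def phiL (v : Fin 3 → ℝ) : E3 →ₗ[ℝ] ℝ where
  toFun x := ∑ i, x i * v i
  map_add' x y := by
    simp [PiLp.add_apply, add_mul, Finset.sum_add_distrib]
  map_smul' c x := by
    simp [PiLp.smul_apply, smul_eq_mul, Finset.mul_sum, mul_assoc]

lemma sum_sq_pos {v : Fin 3 → ℝ} (hv : v ≠ 0) : 0 < ∑ i, v i ^ 2 := by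
  obtain ⟨i, hi⟩ := Function.ne_iff.mp hv
  refine Finset.sum_pos' (fun j _ => sq_nonneg _) ⟨i, Finset.mem_univ i, ?_⟩
  exact lt_of_le_of_ne (sq_nonneg _) (Ne.symm (pow_ne_zero 2 hi))

lemma ker_ne_top {v : Fin 3 → ℝ} (hv : v ≠ 0) : LinearMap.ker (phiL v) ≠ ⊤ := by
  intro h
  have hvE : vecE v ∈ LinearMap.ker (phiL v) := h ▸ Submodule.mem_top
  rw [LinearMap.mem_ker] at hvE
  have h2 : phiL v (vecE v) = ∑ i, v i ^ 2 := by
    simp [phiL, vecE, sq]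
  rw [h2] at hvE
  exact (sum_sq_pos hv).ne' hvE

lemma span_ne_top {v : Fin 3 → ℝ} (hv : v ≠ 0) : (ℝ ∙ (vecE v)) ≠ ⊤ := by
  intro h
  have hvE : vecE v ≠ 0 := fun h0 => hv ((WithLp.equiv 2 (Fin 3 → ℝ)).symm.injective
    (by simpa [vecE] using h0))
  have h1 : Module.finrank ℝ (ℝ ∙ (vecE v)) = 1 := finrank_span_singleton hvE
  rw [h, finrank_top] at h1
  have h3 : Module.finrank ℝ E3 = 3 := finrank_euclideanSpace_fin
  omega

lemma mem_span_of_eq {v : Fin 3 → ℝ} (hv : v ≠ 0) (m : S2)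
    (hm : (∑ i, (m : E3) i * v i)^2 = ∑ i, v i ^ 2) : (m : E3) ∈ (ℝ ∙ (vecE v)) := by
  set t := ∑ i, (m : E3) i * v i with ht
  set N := ∑ i, v i ^ 2 with hN
  have hNpos : 0 < N := sum_sq_pos hv
  have expand : ∀ i : Fin 3, (t * v i - N * (m : E3) i)^2
      = t^2 * v i^2 - (2*t*N) * ((m : E3) i * v i) + N^2 * (m : E3) i^2 := fun i => by ring
  have sum_zero : ∑ i, (t * v i - N * (m : E3) i)^2 = 0 := by
    rw [Finset.sum_congr rfl fun i _ => expand i]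
    simp only [Finset.sum_add_distrib, Finset.sum_sub_distrib, ← Finset.mul_sum]
    rw [← hN, ← ht, sum_sq_coord m, hm]
    ring_nf
    linear_combination (-2:ℝ) * N * hm
  have hzero : ∀ i : Fin 3, t * v i - N * (m : E3) i = 0 := by
    intro i
    have h4 := (Finset.sum_eq_zero_iff_of_nonneg (fun j _ => sq_nonneg _)).mp sum_zero i
      (Finset.mem_univ i)
    exact pow_eq_zero_iff (two_ne_zero) |>.mp h4
  rw [Submodule.mem_span_singleton]
  refine ⟨t / N, ?_⟩
  ext i
  have h5 : (m : E3) i = t / N * v i := by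
    field_simp
    linarith [hzero i]
  rw [h5]
  rfl

/-- the set where the Cauchy–Schwarz inequality is an equality is null -/
lemma null_CS_eq {v : Fin 3 → ℝ} (hv : v ≠ 0) :
    sphereSigma {m : S2 | (∑ i, (m : E3) i * v i)^2 = ∑ i, v i ^ 2} = 0 := by
  refine null_of_submodule (span_ne_top hv) ?_ fun m hm => mem_span_of_eq hv m hm
  have hc : Continuous fun m : S2 => (∑ i, (m : E3) i * v i)^2 :=
    (continuous_finset_sum _ fun i _ => (coord_continuous i).mul continuous_const).pow 2
  exact (isClosed_eq hc continuous_const).measurableSet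

lemma null_orth {v : Fin 3 → ℝ} (hv : v ≠ 0) :
    sphereSigma {m : S2 | ∑ i, (m : E3) i * v i = 0} = 0 := by
  refine null_of_submodule (ker_ne_top hv) ?_ fun m hm => ?_
  · have hc : Continuous fun m : S2 => ∑ i, (m : E3) i * v i :=
      continuous_finset_sum _ fun i _ => (coord_continuous i).mul continuous_const
    exact (isClosed_eq hc continuous_const).measurableSet
  · exact LinearMap.mem_ker.mpr hm

lemma CS (v : Fin 3 → ℝ) (m : S2) : (∑ i, (m : E3) i * v i)^2 ≤ ∑ i, v i ^ 2 := by
  have := Finset.sum_mul_sq_le_sq_mul_sq Finset.univ (fun i => (m : E3) i) v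
  rwa [sum_sq_coord m, one_mul] at this

lemma not_univ_null {Z : Set S2} (hZ : sphereSigma Z = 0) (hZc : sphereSigma Zᶜ = 0) : False := by
  have h1 : sphereSigma Set.univ ≤ sphereSigma Z + sphereSigma Zᶜ := by
    rw [← Set.union_compl_self Z]
    exact measure_union_le _ _
  rw [hZ, hZc, measure_univ] at h1
  simp at h1

end SecondMomentAux

open SecondMomentAux

/-- The second moment Q = ⟨m⊗m − I/3⟩ of a probability density/measure on S² is a
symmetric traceless matrix; its eigenvalues lie in (−1/3, 2/3) for a continuous
positive density, and in [−1/3, 2/3] for an arbitrary probability measure. -/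
theorem second_moment_eigenvalue_constraints
    (f : sphere (0 : EuclideanSpace ℝ (Fin 3)) 1 → ℝ)
    (hf : Continuous f) (hpos : ∀ m, 0 < f m)
    (hnorm : ∫ m, f m ∂sphereSigma = 1)
    (Q : Matrix (Fin 3) (Fin 3) ℝ)
    (hQ : Q = Matrix.of fun i j => ∫ m : sphere (0 : EuclideanSpace ℝ (Fin 3)) 1,
      ((m : EuclideanSpace ℝ (Fin 3)) i * (m : EuclideanSpace ℝ (Fin 3)) j
        - if i = j then (1/3 : ℝ) else 0) * f m ∂sphereSigma) :
    (Q.IsSymm ∧ Q.trace = 0 ∧ spectrum ℝ Q ⊆ Set.Ioo (-(1/3) : ℝ) (2/3)) ∧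
    ∀ μ : Measure (sphere (0 : EuclideanSpace ℝ (Fin 3)) 1), IsProbabilityMeasure μ →
      spectrum ℝ
        ((Matrix.of fun i j => ∫ m : sphere (0 : EuclideanSpace ℝ (Fin 3)) 1,
          ((m : EuclideanSpace ℝ (Fin 3)) i * (m : EuclideanSpace ℝ (Fin 3)) j
            - if i = j then (1/3 : ℝ) else 0) ∂μ) : Matrix (Fin 3) (Fin 3) ℝ)
        ⊆ Set.Icc (-(1/3) : ℝ) (2/3) := by
  constructor
  · refine ⟨?_, ?_, ?_⟩
    · -- symmetry
      rw [hQ]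
      ext i j
      simp only [Matrix.transpose_apply, Matrix.of_apply]
      have hfun : (fun m : S2 => ((m : E3) j * (m : E3) i - if j = i then (1/3:ℝ) else 0) * f m)
          = fun m : S2 => ((m : E3) i * (m : E3) j - if i = j then (1/3:ℝ) else 0) * f m := by
        funext m
        rw [mul_comm ((m : E3) j)]
        congr 2
        by_cases h : i = j <;> simp [h, Ne.symm]
      rw [hfun]
    · -- trace
      rw [hQ, Matrix.trace]
      have h1 : ∀ i : Fin 3, Matrix.diag (Matrix.of fun i j => ∫ m : S2,
          ((m : E3) i * (m : E3) j - if i = j then (1/3:ℝ) else 0) * f m ∂sphereSigma) i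
          = ∫ m : S2, ((m : E3) i * (m : E3) i - 1/3) * f m ∂sphereSigma := by
        intro i; simp [Matrix.diag]
      rw [Finset.sum_congr rfl fun i _ => h1 i, ← integral_finset_sum _
        (fun i _ => cont_integrable (g := fun m : S2 => ((m : E3) i * (m : E3) i - 1/3) * f m) _ ((((coord_continuous i).mul (coord_continuous i)).sub
          continuous_const).mul hf))]
      rw [show (0:ℝ) = ∫ _ : S2, (0:ℝ) ∂sphereSigma by simp]
      refine integral_congr_ae (Filter.Eventually.of_forall fun m => ?_)
      show ∑ i, ((m : E3) i * (m : E3) i - 1/3) * f m = 0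
      rw [← Finset.sum_mul]
      have h3 : ∑ i, ((m : E3) i * (m : E3) i - 1/3) = 0 := by
        rw [Finset.sum_sub_distrib]
        have h4 : ∑ i, (m : E3) i * (m : E3) i = 1 := by
          have := sum_sq_coord m
          simpa [sq] using this
        rw [h4]
        norm_num
      rw [h3, zero_mul]
    · -- open eigenvalue bounds
      intro l hl
      obtain ⟨v, hv, hQv⟩ := eig_vec hl
      set N := ∑ i, v i ^ 2 with hN
      have hNpos : 0 < N := sum_sq_pos hv
      have hdot : v ⬝ᵥ Q *ᵥ v = l * N := by
        rw [hQv]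
        simp only [dotProduct, Pi.smul_apply, smul_eq_mul, hN, Finset.mul_sum]
        exact Finset.sum_congr rfl fun i _ => by ring
      have hform := quad_form sphereSigma f hf v
      rw [hQ, hform] at hdot
      -- hdot : ∫ ((m·v)² − N/3) f = l * N
      have hintf : Integrable f sphereSigma := cont_integrable _ hf
      have htc : Continuous fun m : S2 => (∑ i, (m : E3) i * v i)^2 :=
        (continuous_finset_sum _ fun i _ => (coord_continuous i).mul continuous_const).pow 2
      have hint1 : Integrable (fun m : S2 => ((∑ i, (m : E3) i * v i)^2 - N/3) * f m)
          sphereSigma := cont_integrable _ ((htc.sub continuous_const).mul hf)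
      simp only [Set.mem_Ioo]
      constructor
      · -- l > -1/3 : consider ∫ (m·v)² f
        have hsplit : (fun m : S2 => (∑ i, (m : E3) i * v i)^2 * f m)
            = fun m : S2 => ((∑ i, (m : E3) i * v i)^2 - N/3) * f m + (N/3) * f m :=
          funext fun m => by ring
        have hval : ∫ m : S2, (∑ i, (m : E3) i * v i)^2 * f m ∂sphereSigma = l * N + N/3 := by
          rw [hsplit, integral_add hint1 (hintf.const_mul _), hdot, integral_const_mul, hnorm,
            mul_one]
        have hnonneg : ∀ m : S2, 0 ≤ (∑ i, (m : E3) i * v i)^2 * f m :=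
          fun m => mul_nonneg (sq_nonneg _) (hpos m).le
        have hne : ∫ m : S2, (∑ i, (m : E3) i * v i)^2 * f m ∂sphereSigma ≠ 0 := by
          intro h0
          have hae := (integral_eq_zero_iff_of_nonneg hnonneg
            (cont_integrable _ (htc.mul hf))).mp h0
          rw [Filter.EventuallyEq, ae_iff] at hae
          refine not_univ_null (null_orth hv) (measure_mono_null (fun m hm => ?_) hae)
          simp only [Set.mem_compl_iff, Set.mem_setOf_eq, Pi.zero_apply] at hm ⊢
          intro h5
          apply hm
          rcases mul_eq_zero.mp h5 with h6 | h6
          · exact pow_eq_zero_iff two_ne_zero |>.mp h6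
          · exact absurd h6 (hpos m).ne'
        have hge : (0:ℝ) < l * N + N/3 := by
          rw [← hval]
          exact lt_of_le_of_ne (integral_nonneg hnonneg) (Ne.symm hne)
        nlinarith
      · -- l < 2/3 : consider ∫ (N − (m·v)²) f
        have hsplit : (fun m : S2 => (N - (∑ i, (m : E3) i * v i)^2) * f m)
            = fun m : S2 => (2*N/3) * f m - ((∑ i, (m : E3) i * v i)^2 - N/3) * f m :=
          funext fun m => by ring
        have hval : ∫ m : S2, (N - (∑ i, (m : E3) i * v i)^2) * f m ∂sphereSigma
            = 2*N/3 - l * N := by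
          rw [hsplit, integral_sub (hintf.const_mul _) hint1, hdot, integral_const_mul, hnorm,
            mul_one]
        have hnonneg : ∀ m : S2, 0 ≤ (N - (∑ i, (m : E3) i * v i)^2) * f m :=
          fun m => mul_nonneg (by have := CS v m; rw [← hN] at this; linarith) (hpos m).le
        have hne : ∫ m : S2, (N - (∑ i, (m : E3) i * v i)^2) * f m ∂sphereSigma ≠ 0 := by
          intro h0
          have hae := (integral_eq_zero_iff_of_nonneg hnonneg
            (cont_integrable _ ((continuous_const.sub htc).mul hf))).mp h0
          rw [Filter.EventuallyEq, ae_iff] at hae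
          refine not_univ_null (null_CS_eq hv) (measure_mono_null (fun m hm => ?_) hae)
          simp only [Set.mem_compl_iff, Set.mem_setOf_eq, Pi.zero_apply] at hm ⊢
          intro h5
          apply hm
          rcases mul_eq_zero.mp h5 with h6 | h6
          · rw [← hN]; linarith [sub_eq_zero.mp h6]
          · exact absurd h6 (hpos m).ne'
        have hge : (0:ℝ) < 2*N/3 - l * N := by
          rw [← hval]
          exact lt_of_le_of_ne (integral_nonneg hnonneg) (Ne.symm hne)
        nlinarith
  · -- general probability measure: closed bounds
    intro μ hμ l hl
    have hmatch : (Matrix.of fun i j => ∫ m : S2,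
          ((m : E3) i * (m : E3) j - if i = j then (1/3:ℝ) else 0) ∂μ)
        = Matrix.of fun i j => ∫ m : S2,
          (((m : E3) i * (m : E3) j - if i = j then (1/3:ℝ) else 0) * (fun _ : S2 => (1:ℝ)) m) ∂μ := by
      ext i j
      simp
    rw [hmatch] at hl
    obtain ⟨v, hv, hMv⟩ := eig_vec hl
    set N := ∑ i, v i ^ 2 with hN
    have hNpos : 0 < N := sum_sq_pos hv
    have hdot : v ⬝ᵥ (Matrix.of fun i j => ∫ m : S2,
          (((m : E3) i * (m : E3) j - if i = j then (1/3:ℝ) else 0) * (fun _ : S2 => (1:ℝ)) m) ∂μ) *ᵥ v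
        = l * N := by
      rw [hMv]
      simp only [dotProduct, Pi.smul_apply, smul_eq_mul, hN, Finset.mul_sum]
      exact Finset.sum_congr rfl fun i _ => by ring
    rw [quad_form μ (fun _ : S2 => (1:ℝ)) continuous_const v] at hdot
    have htc : Continuous fun m : S2 => (∑ i, (m : E3) i * v i)^2 :=
      (continuous_finset_sum _ fun i _ => (coord_continuous i).mul continuous_const).pow 2
    have hint1 : Integrable (fun m : S2 => ((∑ i, (m : E3) i * v i)^2 - N/3)
        * (fun _ : S2 => (1:ℝ)) m) μ :=
      cont_integrable _ (((htc.sub continuous_const).mul continuous_const))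
    have hlow : -(N/3) ≤ l * N := by
      rw [← hdot]
      have := integral_mono (μ := μ) (integrable_const (-(N/3))) hint1
        (fun m => by simp only [mul_one]; nlinarith [sq_nonneg (∑ i, (m : E3) i * v i)])
      simpa using this
    have hhigh : l * N ≤ 2*N/3 := by
      rw [← hdot]
      have := integral_mono (μ := μ) hint1 (integrable_const (2*N/3))
        (fun m => by
          simp only [mul_one]
          have := CS v m
          rw [← hN] at this
          linarith)
      simpa using this
    exact ⟨by nlinarith, by nlinarith⟩

end
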